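/- Let C be an abelian category, let P be a noetherian projective object of C, and let A = End_C(P); assume that A is right noetherian. Then the assignment X ↦ Hom_C(P,X) induces a bijection from the set of isomorphism classes of simple objects X of C satisfying Hom_C(P,X) ≠ 0 onto the set of isomorphism classes of simple right A-modules. -/

import Mathlib

open CategoryTheory CategoryTheory.Limits

universe v u

variable {C : Type u} [Category.{v} C] [Abelian C]

/-- The right action of `A = End_C(P)` on `Hom_C(P, X)`, by precomposition. A right `A`-module
is a module over the opposite ring `Aᵐᵒᵖ`. -/
instance homSMulRight (P X : C) : SMul (End P)ᵐᵒᵖ (P ⟶ X) :=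
  ⟨fun a f => a.unop ≫ f⟩

/-- `Hom_C(P, X)` is a right module over `A = End_C(P)`, i.e. a module over `Aᵐᵒᵖ`,
with the action given by precomposition. -/
instance homModuleRight (P X : C) : Module (End P)ᵐᵒᵖ (P ⟶ X) where
  one_smul f := Category.id_comp f
  mul_smul a b f := Category.assoc a.unop b.unop f
  smul_zero a := Limits.comp_zero
  smul_add a f g := Preadditive.comp_add _ _ _ _ _ _
  add_smul a b f := Preadditive.add_comp _ _ _ _ _ _
  zero_smul f := Limits.zero_comp

/-- The type of simple objects `X` of `C` with `Hom_C(P, X) ≠ 0`. -/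
def SimpleObjsWithHom (P : C) : Type u :=
  {X : C // Simple X ∧ ∃ f : P ⟶ X, f ≠ 0}

/-- Isomorphism classes: two such simple objects are identified when they are
isomorphic in `C`. -/
def simpleObjsSetoid (P : C) : Setoid (SimpleObjsWithHom P) where
  r X Y := Nonempty (X.1 ≅ Y.1)
  iseqv := ⟨fun X => ⟨Iso.refl X.1⟩, fun ⟨e⟩ => ⟨e.symm⟩, fun ⟨e⟩ ⟨e'⟩ => ⟨e.trans e'⟩⟩

/-- The type of simple right `A`-modules, for `A = End_C(P)`
(i.e. simple modules over `Aᵐᵒᵖ`). -/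
def SimpleRightMods (P : C) :=
  {M : ModuleCat.{v} (End P)ᵐᵒᵖ // IsSimpleModule (End P)ᵐᵒᵖ M}

/-- Isomorphism classes: two simple right `A`-modules are identified when they are
isomorphic as right `A`-modules. -/
def simpleRightModsSetoid (P : C) : Setoid (SimpleRightMods P) where
  r M N := Nonempty (M.1 ≃ₗ[(End P)ᵐᵒᵖ] N.1)
  iseqv := ⟨fun M => ⟨LinearEquiv.refl _ _⟩, fun ⟨e⟩ => ⟨e.symm⟩, fun ⟨e⟩ ⟨e'⟩ => ⟨e.trans e'⟩⟩


section Aux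

open MulOpposite

variable (P : C) [Projective P]

lemma smul_def' {X : C} (r : (End P)ᵐᵒᵖ) (f : P ⟶ X) : r • f = r.unop ≫ f := rfl

/-- `Hom(P, X)` is a simple right `End P`-module when `X` is simple with a nonzero map from `P`. -/
lemma homSimple {X : C} [Simple X] {f0 : P ⟶ X} (hf0 : f0 ≠ 0) :
    IsSimpleModule (End P)ᵐᵒᵖ (P ⟶ X) := by
  refine isSimpleModule_iff_toSpanSingleton_surjective.mpr ⟨⟨f0, 0, hf0⟩, fun x hx u => ?_⟩
  haveI : Epi x := epi_of_nonzero_to_simple hx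
  refine ⟨op (Projective.factorThru u x), ?_⟩
  rw [LinearMap.toSpanSingleton_apply, smul_def', unop_op]
  exact Projective.factorThru_comp u x

/-- Injectivity: equal annihilators forces isomorphic simple objects. -/
lemma iso_of_ann {X Y : C} [Simple X] [Simple Y] {f : P ⟶ X} {g : P ⟶ Y}
    (hf : f ≠ 0) (hg : g ≠ 0) (h : ∀ a : P ⟶ P, a ≫ f = 0 → a ≫ g = 0) :
    Nonempty (X ≅ Y) := by
  haveI : Epi f := epi_of_nonzero_to_simple hf
  have hk : kernel.ι f ≫ g = 0 := by
    by_contra hne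
    haveI : Epi (kernel.ι f ≫ g) := epi_of_nonzero_to_simple hne
    have h2 := h (Projective.factorThru g (kernel.ι f ≫ g) ≫ kernel.ι f)
      (by rw [Category.assoc, kernel.condition, comp_zero])
    rw [Category.assoc, Projective.factorThru_comp] at h2
    exact hg h2
  let u : X ⟶ Y := Abelian.epiDesc f g hk
  have hu : f ≫ u = g := Abelian.comp_epiDesc f g hk
  haveI : Epi (f ≫ u) := by rw [hu]; exact epi_of_nonzero_to_simple hg
  haveI : Epi u := epi_of_epi f u
  have hu0 : u ≠ 0 := fun h0 => hg (by rw [← hu, h0, comp_zero])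
  haveI : IsIso u := isIso_of_epi_of_nonzero hu0
  exact ⟨asIso u⟩

lemma exists_simple_obj [WellFoundedGT (Subobject P)] [IsNoetherianRing (End P)ᵐᵒᵖ]
    (M : Type v) [AddCommGroup M] [Module (End P)ᵐᵒᵖ M] [IsSimpleModule (End P)ᵐᵒᵖ M] :
    ∃ (X : C) (_ : Simple X) (ρ : P ⟶ X), ρ ≠ 0 ∧
      Nonempty ((P ⟶ X) ≃ₗ[(End P)ᵐᵒᵖ] M) := by
  classical
  haveI := IsSimpleModule.nontrivial (End P)ᵐᵒᵖ M
  obtain ⟨m, hm⟩ := exists_ne (0 : M)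
  set φ : (End P)ᵐᵒᵖ →ₗ[(End P)ᵐᵒᵖ] M := LinearMap.toSpanSingleton (End P)ᵐᵒᵖ M m with hφdef
  have hφ : Function.Surjective φ := IsSimpleModule.toSpanSingleton_surjective (End P)ᵐᵒᵖ hm
  set I : Submodule (End P)ᵐᵒᵖ (End P)ᵐᵒᵖ := LinearMap.ker φ with hIdef
  have Icoatom : IsCoatom I :=
    Ideal.isMaximal_def.mp (IsSimpleModule.ker_toSpanSingleton_isMaximal (End P)ᵐᵒᵖ hm)
  haveI : IsNoetherian (End P)ᵐᵒᵖ (End P)ᵐᵒᵖ := isNoetherianRing_iff.mp inferInstance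
  obtain ⟨n, sf, hs⟩ : ∃ (n : ℕ) (sf : Fin n → (End P)ᵐᵒᵖ),
      Submodule.span (End P)ᵐᵒᵖ (Set.range sf) = I :=
    Submodule.fg_iff_exists_fin_generating_family.mp (IsNoetherian.noetherian I)
  haveI : HasFiniteBiproducts C := HasFiniteBiproducts.of_hasFiniteProducts
  let g : Fin n → (P ⟶ P) := fun j => (sf j).unop
  set q : (⨁ fun _ : Fin n => P) ⟶ P := biproduct.desc g with hqdef
  set π : P ⟶ cokernel q := cokernel.π q with hπdef
  -- lifting lemma
  have hlift : ∀ (h : P ⟶ P) (b : P ⟶ (⨁ fun _ : Fin n => P)), b ≫ q = h → op h ∈ I := by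
    intro h b hb
    have h1 : h = ∑ j : Fin n, (b ≫ biproduct.π (fun _ : Fin n => P) j) ≫ g j := by
      rw [← hb]
      calc b ≫ q = b ≫ 𝟙 _ ≫ q := by rw [Category.id_comp]
        _ = b ≫ (∑ j : Fin n, biproduct.π (fun _ : Fin n => P) j ≫
              biproduct.ι (fun _ : Fin n => P) j) ≫ q := by rw [biproduct.total]
        _ = ∑ j : Fin n, (b ≫ biproduct.π (fun _ : Fin n => P) j) ≫ g j := by
            rw [Preadditive.sum_comp, Preadditive.comp_sum]
            simp only [Category.assoc, hqdef, biproduct.ι_desc]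
    rw [← hs]
    have h2 : (op h : (End P)ᵐᵒᵖ) =
        ∑ j : Fin n, (op (b ≫ biproduct.π (fun _ : Fin n => P) j) : (End P)ᵐᵒᵖ) • sf j := by
      rw [h1, Finset.op_sum]
      refine Finset.sum_congr rfl fun j _ => ?_
      rfl
    rw [h2]
    exact Submodule.sum_mem _ fun j _ =>
      Submodule.smul_mem _ _ (Submodule.subset_span (Set.mem_range_self j))
  -- kernel subobject of π is proper
  have hπtop : kernelSubobject π ≠ ⊤ := by
    intro htop
    haveI : IsIso (kernelSubobject π).arrow := (Subobject.isIso_arrow_iff_eq_top _).mpr htop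
    have hπ0 : π = 0 := zero_of_epi_comp (kernelSubobject π).arrow (kernelSubobject_arrow_comp π)
    haveI : Epi q := CategoryTheory.Abelian.epi_of_cokernel_π_eq_zero q hπ0
    have h1 : (1 : (End P)ᵐᵒᵖ) ∈ I := by
      have := hlift (𝟙 P) (Projective.factorThru (𝟙 P) q) (Projective.factorThru_comp _ _)
      exact this
    refine Icoatom.1 (Submodule.eq_top_iff'.mpr fun x => ?_)
    simpa using I.smul_mem x h1
  -- maximal proper subobject above kernelSubobject π
  obtain ⟨K, hKS, hKmax⟩ := (wellFounded_gt (α := Subobject P)).has_min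
    {K : Subobject P | kernelSubobject π ≤ K ∧ K ≠ ⊤} ⟨kernelSubobject π, le_refl _, hπtop⟩
  obtain ⟨hK1, hK2⟩ := hKS
  set X : C := cokernel K.arrow with hXdef
  set ρ : P ⟶ X := cokernel.π K.arrow with hρdef
  have hρ : ρ ≠ 0 := by
    intro h0
    haveI : Epi K.arrow := CategoryTheory.Abelian.epi_of_cokernel_π_eq_zero _ h0
    haveI : IsIso K.arrow := isIso_of_mono_of_epi _
    exact hK2 ((Subobject.isIso_arrow_iff_eq_top _).mp this)
  have harrρ : K.arrow ≫ ρ = 0 := cokernel.condition _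
  have hqρ : q ≫ ρ = 0 := by
    have hfac : (kernelSubobject π).factorThru q
        (kernelSubobject_factors π q (cokernel.condition q)) ≫ (kernelSubobject π).arrow = q :=
      Subobject.factorThru_arrow _ _ _
    have harr : (kernelSubobject π).arrow ≫ ρ = 0 := by
      rw [← Subobject.ofLE_arrow hK1, Category.assoc, harrρ, comp_zero]
    rw [← hfac, Category.assoc, harr, comp_zero]
  -- X is simple
  have hXsimple : Simple X := by
    constructor
    intro W f hmono
    constructor
    · intro hiso h0
      haveI : Epi f := inferInstance
      have hid : 𝟙 X = (0 : X ⟶ X) := by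
        rw [← cancel_epi f, Category.comp_id, h0, comp_zero]
      exact hρ (by rw [← Category.comp_id ρ, hid, comp_zero])
    · intro hf0
      haveI : Mono (pullback.fst ρ f) := inferInstance
      haveI : Epi (pullback.snd ρ f) := inferInstance
      have hKle : K ≤ Subobject.mk (pullback.fst ρ f) := by
        refine Subobject.le_mk_of_comm (pullback.lift K.arrow 0 ?_) (pullback.lift_fst _ _ _)
        rw [harrρ, zero_comp]
      by_cases htop : Subobject.mk (pullback.fst ρ f) = ⊤
      · haveI : IsIso (pullback.fst ρ f) := (Subobject.isIso_iff_mk_eq_top _).mpr htop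
        haveI : Epi (pullback.snd ρ f ≫ f) := by rw [← pullback.condition]; infer_instance
        haveI : Epi f := epi_of_epi (pullback.snd ρ f) f
        exact isIso_of_mono_of_epi f
      · exfalso
        have hmem : Subobject.mk (pullback.fst ρ f) ∈
            {K : Subobject P | kernelSubobject π ≤ K ∧ K ≠ ⊤} := ⟨le_trans hK1 hKle, htop⟩
        have heq : K = Subobject.mk (pullback.fst ρ f) := by
          rcases hKle.lt_or_eq with hlt | heq
          · exact absurd hlt (hKmax _ hmem)
          · exact heq
        have hfstρ : pullback.fst ρ f ≫ ρ = 0 := by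
          rw [← Subobject.ofMkLE_arrow (le_of_eq heq.symm), Category.assoc, harrρ, comp_zero]
        have hsnd : pullback.snd ρ f ≫ f = 0 := by rw [← pullback.condition, hfstρ]
        have hsnd0 : pullback.snd ρ f = 0 := zero_of_comp_mono f hsnd
        have hidW : 𝟙 W = (0 : W ⟶ W) := by
          rw [← cancel_epi (pullback.snd ρ f), Category.comp_id, hsnd0, comp_zero]
        exact hf0 (by rw [← Category.id_comp f, hidW, zero_comp])
  -- the module Hom(P, X) is isomorphic to M
  set ψ : (End P)ᵐᵒᵖ →ₗ[(End P)ᵐᵒᵖ] (P ⟶ X) := LinearMap.toSpanSingleton (End P)ᵐᵒᵖ (P ⟶ X) ρ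
    with hψdef
  have hψsurj : Function.Surjective ψ := by
    intro u
    refine ⟨op (Projective.factorThru u ρ), ?_⟩
    rw [hψdef, LinearMap.toSpanSingleton_apply, smul_def', unop_op]
    exact Projective.factorThru_comp u ρ
  have hIle : I ≤ LinearMap.ker ψ := by
    rw [← hs]
    refine Submodule.span_le.mpr fun a ha => LinearMap.mem_ker.mpr ?_
    obtain ⟨j, rfl⟩ := ha
    rw [hψdef, LinearMap.toSpanSingleton_apply, smul_def']
    have : (sf j).unop = biproduct.ι (fun _ : Fin n => P) j ≫ q := by
      rw [hqdef]; exact (biproduct.ι_desc g j).symm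
    rw [this, Category.assoc, hqρ, comp_zero]
  have hker_ne_top : LinearMap.ker ψ ≠ ⊤ := by
    intro h
    have h1 : ψ 1 = 0 := LinearMap.mem_ker.mp (h ▸ Submodule.mem_top)
    rw [hψdef, LinearMap.toSpanSingleton_apply, one_smul] at h1
    exact hρ h1
  have hkerI : LinearMap.ker ψ = I := by
    by_contra hne
    exact hker_ne_top (Icoatom.2 _ (lt_of_le_of_ne hIle (Ne.symm hne)))
  exact ⟨X, hXsimple, ρ, hρ,
    ⟨((LinearMap.quotKerEquivOfSurjective ψ hψsurj).symm.trans
      (Submodule.quotEquivOfEq _ _ hkerI)).trans (LinearMap.quotKerEquivOfSurjective φ hφ)⟩⟩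


/-- Postcomposition with an isomorphism, as a linear equivalence of right modules. -/
def homCongr' {X Y : C} (e : X ≅ Y) : (P ⟶ X) ≃ₗ[(End P)ᵐᵒᵖ] (P ⟶ Y) where
  toFun f := f ≫ e.hom
  invFun g := g ≫ e.inv
  map_add' f g := Preadditive.add_comp _ _ _ _ _ _
  map_smul' r f := Category.assoc r.unop f e.hom
  left_inv f := by simp
  right_inv g := by simp

end Aux

/-- Let `C` be an abelian category, `P` a noetherian projective object of `C`,
and `A = End_C(P)`; assume `A` is right noetherian.  Then the assignment `X ↦ Hom_C(P, X)`
induces a bijection from the set of isomorphism classes of simple objects `X` of `C` satisfying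
`Hom_C(P, X) ≠ 0` onto the set of isomorphism classes of simple right `A`-modules.
(In particular, `Hom_C(P, X)` is a simple right `A`-module for every such `X`, and the induced
map `b` on isomorphism classes sends the class of `X` to the class of `Hom_C(P, X)`.) -/
theorem stmt6 (P : C) [Projective P] [WellFoundedGT (Subobject P)]
    [IsNoetherianRing (End P)ᵐᵒᵖ] :
    (∀ X : SimpleObjsWithHom P, IsSimpleModule (End P)ᵐᵒᵖ (P ⟶ X.1)) ∧
    ∃ b : Quotient (simpleObjsSetoid P) → Quotient (simpleRightModsSetoid P),
      Function.Bijective b ∧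
      ∀ (X : SimpleObjsWithHom P) (N : SimpleRightMods P),
        Nonempty ((P ⟶ X.1) ≃ₗ[(End P)ᵐᵒᵖ] N.1) →
          b (Quotient.mk (simpleObjsSetoid P) X) = Quotient.mk (simpleRightModsSetoid P) N := by
  classical
  have part1 : ∀ X : SimpleObjsWithHom P, IsSimpleModule (End P)ᵐᵒᵖ (P ⟶ X.1) := by
    intro X
    haveI := X.2.1
    obtain ⟨f0, hf0⟩ := X.2.2
    exact homSimple P hf0
  refine ⟨part1, ?_⟩
  let b0 : SimpleObjsWithHom P → Quotient (simpleRightModsSetoid P) := fun X =>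
    Quotient.mk (simpleRightModsSetoid P) ⟨ModuleCat.of (End P)ᵐᵒᵖ (P ⟶ X.1), part1 X⟩
  have hresp : ∀ X Y : SimpleObjsWithHom P, (simpleObjsSetoid P).r X Y → b0 X = b0 Y := by
    rintro X Y ⟨e⟩
    exact Quotient.sound ⟨homCongr' P e⟩
  refine ⟨Quotient.lift b0 hresp, ⟨?_, ?_⟩, ?_⟩
  · intro x y
    refine Quotient.inductionOn₂ x y fun X Y h => ?_
    obtain ⟨φ⟩ := Quotient.exact (h : b0 X = b0 Y)
    haveI := X.2.1; haveI := Y.2.1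
    obtain ⟨f0, hf0⟩ := X.2.2
    have hg0 : φ f0 ≠ 0 := fun h0 => hf0 (by simpa using φ.map_eq_zero_iff.mp h0)
    have hann : ∀ a : P ⟶ P, a ≫ f0 = 0 → a ≫ φ f0 = 0 := by
      intro a ha
      have h2 : φ ((MulOpposite.op a : (End P)ᵐᵒᵖ) • f0)
          = (MulOpposite.op a : (End P)ᵐᵒᵖ) • φ f0 := map_smul φ _ _
      have h3 : (MulOpposite.op a : (End P)ᵐᵒᵖ) • f0 = (0 : P ⟶ X.1) := ha
      rw [h3, map_zero] at h2
      exact h2.symm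
    obtain ⟨e⟩ := iso_of_ann P hf0 hg0 hann
    exact Quotient.sound ⟨e⟩
  · intro y
    refine Quotient.inductionOn y fun N => ?_
    haveI := N.2
    obtain ⟨X, hX, ρ, hρ, ⟨e⟩⟩ := exists_simple_obj P (↑N.1)
    exact ⟨Quotient.mk (simpleObjsSetoid P) ⟨X, hX, ρ, hρ⟩, Quotient.sound ⟨e⟩⟩
  · rintro X N ⟨e⟩
    exact Quotient.sound ⟨e⟩
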